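/- Small model property for conjunctions of difference constraints: let Γ be a finite conjunction of constraints of the forms x' ≤ x + k, x' < x + k, x' = x + k (variables x, x' among x_1,...,x_n, integer constants k). If Γ has a solution over the natural numbers, then Γ has a solution in which every variable takes a value at most M = Σ_i (|k_i| + 1), where the sum ranges over all constant occurrences k_i in Γ. -/

import Mathlib

/-- Kinds of difference constraints: `x' ≤ x + k`, `x' < x + k`, `x' = x + k`. -/
inductive DCKind : Type
  | le | lt | eq

/-- A difference constraint between variables `i, j` (meaning
`x_i ≤/</= x_j + k`). -/
structure DiffConstr (n : ℕ) : Type where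
  kind : DCKind
  i : Fin n
  j : Fin n
  k : ℤ

/-- Satisfaction of a difference constraint by a valuation into ℕ. -/
def DiffConstr.holds {n : ℕ} (s : Fin n → ℕ) (c : DiffConstr n) : Prop :=
  match c.kind with
  | .le => (s c.i : ℤ) ≤ (s c.j : ℤ) + c.k
  | .lt => (s c.i : ℤ) < (s c.j : ℤ) + c.k
  | .eq => (s c.i : ℤ) = (s c.j : ℤ) + c.k

/-- Thresholds `t` for which the "decrement everything ≥ t" operation might
break constraint `c`. -/
def badSet {n : ℕ} (s : Fin n → ℕ) (c : DiffConstr n) : Finset ℕ :=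
  match c.kind with
  | .le => if (s c.i : ℤ) = (s c.j : ℤ) + c.k then Finset.Ioc (s c.i) (s c.j) else ∅
  | .lt => if (s c.i : ℤ) = (s c.j : ℤ) + c.k - 1 then Finset.Ioc (s c.i) (s c.j) else ∅
  | .eq => Finset.Ioc (min (s c.i) (s c.j)) (max (s c.i) (s c.j))

lemma badSet_card {n : ℕ} (s : Fin n → ℕ) (c : DiffConstr n) (h : c.holds s) :
    (badSet s c).card ≤ c.k.natAbs + 1 := by
  rcases c with ⟨kind, i, j, k⟩
  cases kind <;> simp only [DiffConstr.holds, badSet] at h ⊢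
  · split
    · next ht => simp only [Nat.card_Ioc]; omega
    · simp
  · split
    · next ht => simp only [Nat.card_Ioc]; omega
    · simp
  · simp only [Nat.card_Ioc]; omega

lemma badSet_safe {n : ℕ} (s : Fin n → ℕ) (c : DiffConstr n) (t : ℕ) (ht : 1 ≤ t)
    (h : c.holds s) (hb : t ∉ badSet s c) :
    c.holds (fun i => if t ≤ s i then s i - 1 else s i) := by
  rcases c with ⟨kind, i, j, k⟩
  cases kind <;> simp only [DiffConstr.holds, badSet] at h hb ⊢
  · by_cases htight : (s i : ℤ) = (s j : ℤ) + k
    · simp only [htight, if_pos, Finset.mem_Ioc, not_and, not_le] at hb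
      split <;> split <;> omega
    · split <;> split <;> omega
  · by_cases htight : (s i : ℤ) = (s j : ℤ) + k - 1
    · simp only [htight, if_pos, Finset.mem_Ioc, not_and, not_le] at hb
      split <;> split <;> omega
    · split <;> split <;> omega
  · simp only [Finset.mem_Ioc, not_and, not_le] at hb
    split <;> split <;> omega

/-- Union of the bad sets over a list of constraints. -/
def badUnion {n : ℕ} (s : Fin n → ℕ) : List (DiffConstr n) → Finset ℕ
  | [] => ∅
  | c :: Γ => badSet s c ∪ badUnion s Γ

lemma badUnion_card {n : ℕ} (s : Fin n → ℕ) (Γ : List (DiffConstr n))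
    (h : ∀ c ∈ Γ, c.holds s) :
    (badUnion s Γ).card ≤ (Γ.map (fun c => c.k.natAbs + 1)).sum := by
  induction Γ with
  | nil => simp [badUnion]
  | cons c Γ ih =>
    simp only [badUnion, List.map_cons, List.sum_cons]
    calc (badSet s c ∪ badUnion s Γ).card ≤ (badSet s c).card + (badUnion s Γ).card :=
          Finset.card_union_le _ _
      _ ≤ c.k.natAbs + 1 + (Γ.map (fun c => c.k.natAbs + 1)).sum := by
          gcongr
          · exact badSet_card s c (h c List.mem_cons_self)
          · exact ih (fun c hc => h c (List.mem_cons_of_mem _ hc))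

lemma badUnion_notMem {n : ℕ} (s : Fin n → ℕ) (Γ : List (DiffConstr n)) (t : ℕ)
    (ht : t ∉ badUnion s Γ) : ∀ c ∈ Γ, t ∉ badSet s c := by
  induction Γ with
  | nil => simp
  | cons c Γ ih =>
    simp only [badUnion, Finset.mem_union, not_or] at ht
    intro c' hc'
    rcases List.mem_cons.mp hc' with rfl | hc'
    · exact ht.1
    · exact ih ht.2 c' hc'

lemma diff_constraints_aux {n : ℕ} (Γ : List (DiffConstr n)) :
    ∀ N : ℕ, ∀ s : Fin n → ℕ, Finset.univ.sum s = N → (∀ c ∈ Γ, c.holds s) →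
    ∃ s' : Fin n → ℕ, (∀ c ∈ Γ, c.holds s') ∧
      ∀ i, s' i ≤ (Γ.map (fun c => c.k.natAbs + 1)).sum := by
  intro N
  induction N using Nat.strong_induction_on with
  | _ N ih =>
    intro s hsum hs
    set M := (Γ.map (fun c => c.k.natAbs + 1)).sum with hM
    by_cases hbig : ∀ i, s i ≤ M
    · exact ⟨s, hs, hbig⟩
    · push_neg at hbig
      obtain ⟨i0, hi0⟩ := hbig
      -- find a good threshold t in Icc 1 (s i0) outside the bad set
      have hcard : (badUnion s Γ).card < (Finset.Icc 1 (s i0)).card := by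
        have h1 := badUnion_card s Γ hs
        simp only [Nat.card_Icc]
        omega
      have hne : (Finset.Icc 1 (s i0) \ badUnion s Γ).Nonempty := by
        rw [← Finset.card_pos]
        have := Finset.le_card_sdiff (badUnion s Γ) (Finset.Icc 1 (s i0))
        omega
      obtain ⟨t, htmem⟩ := hne
      rw [Finset.mem_sdiff] at htmem
      obtain ⟨htIcc, htBad⟩ := htmem
      simp only [Finset.mem_Icc] at htIcc
      set s' : Fin n → ℕ := fun i => if t ≤ s i then s i - 1 else s i with hs'
      have hholds : ∀ c ∈ Γ, c.holds s' := fun c hc =>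
        badSet_safe s c t htIcc.1 (hs c hc) (badUnion_notMem s Γ t htBad c hc)
      have hlt : Finset.univ.sum s' < Finset.univ.sum s := by
        apply Finset.sum_lt_sum
          (fun j _ => by show (if t ≤ s j then s j - 1 else s j) ≤ s j; split <;> omega)
        refine ⟨i0, Finset.mem_univ _, ?_⟩
        show (if t ≤ s i0 then s i0 - 1 else s i0) < s i0
        rw [if_pos htIcc.2]
        omega
      exact ih (Finset.univ.sum s') (hsum ▸ hlt) s' rfl hholds

/-- Small model property for conjunctions of difference constraints:
if the system has a solution over ℕ, then it has a solution in which
every variable is bounded by `M = Σ (|k_i| + 1)`. -/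
theorem diff_constraints_small_model {n : ℕ} (Γ : List (DiffConstr n))
    (hsat : ∃ s : Fin n → ℕ, ∀ c ∈ Γ, c.holds s) :
    ∃ s : Fin n → ℕ, (∀ c ∈ Γ, c.holds s) ∧
      ∀ i, s i ≤ (Γ.map (fun c => c.k.natAbs + 1)).sum := by
  obtain ⟨s, hs⟩ := hsat
  exact diff_constraints_aux Γ (Finset.univ.sum s) s rfl hs
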